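/- Fix a prime p. Every element of PS(p) lies in the group (inside ℚ^×) generated by the power sequences c(τ,j) with j ∈ τ and |τ| ≥ 2: if c is a power sequence all of whose values c_i^σ are powers of p and which satisfies c_i^{{i}} = 1 for all i, then there exists z assigning an integer z(τ,j) to each pair (τ,j) with τ ⊆ {1,…,m}, |τ| ≥ 2 and j ∈ τ, such that for every subset σ ⊆ {1,…,m} and every i ∈ {1,…,m}: (c_i^σ : ℚ) = ∏_{(τ,j) : j ∈ τ, |τ| ≥ 2} ((c(τ,j)_i^σ : ℚ))^{z(τ,j)}. -/

import Mathlib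

open Finset in
private lemma zpow_sum_aux (a : ℚ) (ha : a ≠ 0) {ι : Type*} (s : Finset ι) (z : ι → ℤ) :
    ∏ i ∈ s, a ^ z i = a ^ (∑ i ∈ s, z i) := by
  classical
  induction s using Finset.induction with
  | empty => simp
  | insert _ _ hx ih =>
    rw [Finset.prod_insert hx, Finset.sum_insert hx, zpow_add₀ ha, ih]

open Finset in
private lemma mobius_aux {α : Type*} [DecidableEq α] (f : Finset α → ℤ) (σ : Finset α) :
    ∑ τ ∈ σ.powerset, ∑ ρ ∈ τ.powerset, (-1 : ℤ) ^ (τ.card - ρ.card) * f ρ = f σ := by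
  rw [Finset.sum_comm' (t' := σ.powerset)
      (s' := fun ρ => σ.powerset.filter (fun τ => ρ ⊆ τ))
      (fun τ ρ => by
        simp only [mem_powerset, mem_filter]
        constructor
        · rintro ⟨h1, h2⟩; exact ⟨⟨h1, h2⟩, h2.trans h1⟩
        · rintro ⟨⟨h1, h2⟩, _⟩; exact ⟨h1, h2⟩)]
  have key : ∀ ρ ∈ σ.powerset,
      (∑ τ ∈ σ.powerset.filter (fun τ => ρ ⊆ τ), (-1 : ℤ) ^ (τ.card - ρ.card) * f ρ)
        = if ρ = σ then f ρ else 0 := by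
    intro ρ hρ
    rw [mem_powerset] at hρ
    rw [← Finset.sum_mul]
    have : (∑ τ ∈ σ.powerset.filter (fun τ => ρ ⊆ τ), (-1 : ℤ) ^ (τ.card - ρ.card))
        = ∑ s ∈ (σ \ ρ).powerset, (-1 : ℤ) ^ s.card := by
      refine Finset.sum_bij' (fun τ _ => τ \ ρ) (fun s _ => s ∪ ρ) ?_ ?_ ?_ ?_ ?_
      · intro τ hτ
        rw [mem_filter, mem_powerset] at hτ
        exact mem_powerset.mpr (sdiff_subset_sdiff hτ.1 (Finset.Subset.refl _))
      · intro s hs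
        rw [mem_powerset] at hs
        rw [mem_filter, mem_powerset]
        exact ⟨Finset.union_subset (hs.trans sdiff_subset) hρ, subset_union_right⟩
      · intro τ hτ
        rw [mem_filter] at hτ
        show (τ \ ρ) ∪ ρ = τ
        exact sdiff_union_of_subset hτ.2
      · intro s hs
        rw [mem_powerset] at hs
        have hd : Disjoint s ρ :=
          Finset.disjoint_left.mpr fun x hx h2 => (Finset.mem_sdiff.mp (hs hx)).2 h2
        show (s ∪ ρ) \ ρ = s
        exact Finset.union_sdiff_cancel_right hd
      · intro τ hτ
        rw [mem_filter] at hτ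
        show ((-1 : ℤ)) ^ (τ.card - ρ.card) = (-1 : ℤ) ^ (τ \ ρ).card
        rw [card_sdiff_of_subset hτ.2]
    rw [this, Finset.sum_powerset_neg_one_pow_card]
    by_cases h : ρ = σ
    · subst h; simp
    · have : ¬ σ \ ρ = ∅ := by
        rw [Finset.sdiff_eq_empty_iff_subset]
        intro hσρ
        exact h (Finset.Subset.antisymm hρ hσρ)
      rw [if_neg this, if_neg h, zero_mul]
  rw [Finset.sum_congr rfl key, Finset.sum_ite_eq' σ.powerset σ f,
    if_pos (mem_powerset.mpr (Finset.Subset.refl σ))]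

/-- every element of `PS(p)` lies in the group inside `ℚˣ`
generated by the power sequences `c(τ,j)` with `j ∈ τ` and `|τ| ≥ 2`. -/
theorem stmt_16 (m : ℕ) (p : ℕ) (hp : p.Prime)
    (c : Finset (Fin m) → Fin m → ℕ)
    (hpos : ∀ σ i, 0 < c σ i)
    (hout : ∀ σ i, i ∉ σ → c σ i = 1)
    (hdvd : ∀ τ σ : Finset (Fin m), τ ⊆ σ → ∀ i, c τ i ∣ c σ i)
    (hnorm : ∀ i : Fin m, c {i} i = 1)
    (hpow : ∀ (σ : Finset (Fin m)) (i : Fin m), ∃ k : ℕ, c σ i = p ^ k) :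
    ∃ z : Finset (Fin m) × Fin m → ℤ,
      ∀ (σ : Finset (Fin m)) (i : Fin m),
        (c σ i : ℚ) =
          ∏ tj ∈ Finset.univ.filter
              (fun tj : Finset (Fin m) × Fin m => tj.2 ∈ tj.1 ∧ 2 ≤ tj.1.card),
            ((if i = tj.2 ∧ tj.1 ⊆ σ then (p : ℚ) else 1)) ^ z tj := by
  classical
  choose k hk using hpow
  have hpne : (p : ℚ) ≠ 0 := by exact_mod_cast hp.ne_zero
  have hp1 : p ≠ 1 := hp.one_lt.ne'
  have hkz : ∀ {n : ℕ}, p ^ n = 1 → n = 0 := by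
    intro n h
    by_contra hn
    exact hp1 ((pow_eq_one_iff.mp h).resolve_right hn)
  have hk0 : ∀ σ i, i ∉ σ → k σ i = 0 := by
    intro σ i hi
    have h1 := hout σ i hi
    rw [hk σ i] at h1
    exact hkz h1
  have hk1 : ∀ i, k {i} i = 0 := by
    intro i
    have h1 := hnorm i
    rw [hk {i} i] at h1
    exact hkz h1
  refine ⟨fun tj => ∑ ρ ∈ tj.1.powerset, (-1 : ℤ) ^ (tj.1.card - ρ.card) * (k ρ tj.2 : ℤ),
    fun σ i => ?_⟩
  have step1 : (∏ tj ∈ Finset.univ.filter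
        (fun tj : Finset (Fin m) × Fin m => tj.2 ∈ tj.1 ∧ 2 ≤ tj.1.card),
        ((if i = tj.2 ∧ tj.1 ⊆ σ then (p : ℚ) else 1)) ^
          (∑ ρ ∈ tj.1.powerset, (-1 : ℤ) ^ (tj.1.card - ρ.card) * (k ρ tj.2 : ℤ)))
      = ∏ tj ∈ Finset.univ.filter
        (fun tj : Finset (Fin m) × Fin m => tj.2 ∈ tj.1 ∧ 2 ≤ tj.1.card),
        (if i = tj.2 ∧ tj.1 ⊆ σ then
          (p : ℚ) ^ (∑ ρ ∈ tj.1.powerset, (-1 : ℤ) ^ (tj.1.card - ρ.card) * (k ρ tj.2 : ℤ))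
         else 1) := by
    refine Finset.prod_congr rfl fun tj _ => ?_
    by_cases h : i = tj.2 ∧ tj.1 ⊆ σ
    · rw [if_pos h, if_pos h]
    · rw [if_neg h, if_neg h, one_zpow]
  rw [step1, ← Finset.prod_filter, Finset.filter_filter, zpow_sum_aux (p : ℚ) hpne]
  have step2 : (∑ tj ∈ Finset.univ.filter
        (fun tj : Finset (Fin m) × Fin m =>
          (tj.2 ∈ tj.1 ∧ 2 ≤ tj.1.card) ∧ i = tj.2 ∧ tj.1 ⊆ σ),
        ∑ ρ ∈ tj.1.powerset, (-1 : ℤ) ^ (tj.1.card - ρ.card) * (k ρ tj.2 : ℤ))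
      = ∑ τ ∈ σ.powerset.filter (fun τ => i ∈ τ ∧ 2 ≤ τ.card),
        ∑ ρ ∈ τ.powerset, (-1 : ℤ) ^ (τ.card - ρ.card) * (k ρ i : ℤ) := by
    refine Finset.sum_bij' (fun tj _ => tj.1) (fun τ _ => (τ, i)) ?_ ?_ ?_ ?_ ?_
    · intro tj htj
      simp only [Finset.mem_filter, Finset.mem_univ, true_and] at htj
      obtain ⟨⟨h1, h2⟩, h3, h4⟩ := htj
      simp only [Finset.mem_filter, Finset.mem_powerset]
      refine ⟨h4, ?_, h2⟩
      rw [h3]; exact h1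
    · intro τ hτ
      simp only [Finset.mem_filter, Finset.mem_powerset] at hτ
      simp only [Finset.mem_filter, Finset.mem_univ, true_and]
      exact ⟨⟨hτ.2.1, hτ.2.2⟩, hτ.1⟩
    · intro tj htj
      simp only [Finset.mem_filter, Finset.mem_univ, true_and] at htj
      show (tj.1, i) = tj
      exact Prod.ext rfl htj.2.1
    · intro τ _; rfl
    · intro tj htj
      simp only [Finset.mem_filter, Finset.mem_univ, true_and] at htj
      show (∑ ρ ∈ tj.1.powerset, (-1 : ℤ) ^ (tj.1.card - ρ.card) * (k ρ tj.2 : ℤ))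
        = ∑ ρ ∈ tj.1.powerset, (-1 : ℤ) ^ (tj.1.card - ρ.card) * (k ρ i : ℤ)
      rw [htj.2.1]
  rw [step2]
  have step3 : (∑ τ ∈ σ.powerset.filter (fun τ => i ∈ τ ∧ 2 ≤ τ.card),
        ∑ ρ ∈ τ.powerset, (-1 : ℤ) ^ (τ.card - ρ.card) * (k ρ i : ℤ))
      = ∑ τ ∈ σ.powerset,
        ∑ ρ ∈ τ.powerset, (-1 : ℤ) ^ (τ.card - ρ.card) * (k ρ i : ℤ) := by
    refine Finset.sum_subset (Finset.filter_subset _ _) ?_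
    intro τ hτ hτ'
    simp only [Finset.mem_filter, not_and, not_le] at hτ'
    by_cases hi : i ∈ τ
    · have hc : τ.card < 2 := hτ' hτ hi
      have hc1 : τ.card = 1 := by
        have : 1 ≤ τ.card := Finset.card_pos.mpr ⟨i, hi⟩
        omega
      obtain ⟨a, ha⟩ := Finset.card_eq_one.mp hc1
      have hai : a = i := by
        rw [ha, Finset.mem_singleton] at hi; exact hi.symm
      subst hai
      have hins : ({a} : Finset (Fin m)) = insert a ∅ := rfl
      rw [ha, hins,
        Finset.sum_powerset_insert (Finset.notMem_empty a)]
      simp [hk0 ∅ a (Finset.notMem_empty a), hk1 a]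
    · refine Finset.sum_eq_zero fun ρ hρ => ?_
      rw [Finset.mem_powerset] at hρ
      have : i ∉ ρ := fun h => hi (hρ h)
      rw [hk0 ρ i this]
      simp
  rw [step3, mobius_aux (fun ρ => (k ρ i : ℤ)) σ]
  rw [hk σ i]
  push_cast
  rw [zpow_natCast]
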